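/- Let ι be a nonempty finite type, r : ι → ℝ, α > 0, β > 0, δ := α/β, and let x : ι → ℝ satisfy x_i > 0 for all i and ∑_i x_i = 1. Then the following are equivalent: (1) for every i, β·(r_i − ∑_j x_j r_j) = α·(ln x_i − ∑_j x_j ln x_j) (i.e., x is an interior fixed point of the SQL vector field for rewards r); (2) for every i, x_i = exp(r_i/δ) / ∑_j exp(r_j/δ) (i.e., x is the softmax/Boltzmann distribution of r with temperature δ). -/

import Mathlib

open Real

/-- **Interior fixed points of the SQL vector field are softmax (Boltzmann)
distributions.** For rewards `r`, parameters `α, β > 0` and exploration rate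
`δ = α/β`, a strictly positive choice distribution `x` satisfies
`β (r_i − ∑_j x_j r_j) = α (ln x_i − ∑_j x_j ln x_j)` for every `i` iff
`x_i = exp(r_i/δ) / ∑_j exp(r_j/δ)` for every `i`. -/
theorem sql_fixed_point_iff_softmax {ι : Type*} [Fintype ι] [Nonempty ι]
    (r : ι → ℝ) (α β : ℝ) (hα : 0 < α) (hβ : 0 < β)
    (x : ι → ℝ) (hxpos : ∀ i, 0 < x i) (hxsum : ∑ i, x i = 1) :
    (∀ i, β * (r i - ∑ j, x j * r j)
        = α * (Real.log (x i) - ∑ j, x j * Real.log (x j))) ↔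
    (∀ i, x i = Real.exp (r i / (α / β)) / ∑ j, Real.exp (r j / (α / β))) := by
  have hαβ : (0:ℝ) < α / β := div_pos hα hβ
  have hS : (0:ℝ) < ∑ j, Real.exp (r j / (α / β)) :=
    Finset.sum_pos (fun j _ => Real.exp_pos _) Finset.univ_nonempty
  constructor
  · intro h i
    set L := ∑ j, x j * Real.log (x j) with hL
    set R := ∑ j, x j * r j with hR
    set c : ℝ := L - R / (α / β) with hc
    have hlog : ∀ i, Real.log (x i) = r i / (α / β) + c := by
      intro i
      have hi := h i
      rw [hc]
      field_simp
      nlinarith [hi]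
    have hx : ∀ i, x i = Real.exp (r i / (α / β)) * Real.exp c := by
      intro i
      rw [← Real.exp_add, ← hlog i, Real.exp_log (hxpos i)]
    have hsum : (∑ j, Real.exp (r j / (α / β))) * Real.exp c = 1 := by
      rw [Finset.sum_mul]
      rw [← hxsum]
      exact Finset.sum_congr rfl (fun j _ => (hx j).symm)
    have hec : Real.exp c = 1 / ∑ j, Real.exp (r j / (α / β)) := by
      rw [mul_comm] at hsum
      exact eq_one_div_of_mul_eq_one_left hsum
    rw [hx i, hec]
    rw [mul_one_div]
  · intro h i
    have hlog : ∀ i, Real.log (x i)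
        = r i / (α / β) - Real.log (∑ j, Real.exp (r j / (α / β))) := by
      intro i
      rw [h i, Real.log_div (Real.exp_ne_zero _) hS.ne', Real.log_exp]
    have hLsum : ∑ j, x j * Real.log (x j)
        = (∑ j, x j * r j) / (α / β)
          - Real.log (∑ j, Real.exp (r j / (α / β))) := by
      rw [Finset.sum_div]
      rw [show (∑ j, x j * r j / (α / β)) - Real.log (∑ j, Real.exp (r j / (α / β)))
          = ∑ j, (x j * r j / (α / β) - x j * Real.log (∑ j, Real.exp (r j / (α / β)))) by
        rw [Finset.sum_sub_distrib, ← Finset.sum_mul, hxsum, one_mul]]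
      refine Finset.sum_congr rfl (fun j _ => ?_)
      rw [hlog j]; ring
    rw [hlog i, hLsum]
    field_simp
    ring
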